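/- arXiv:1602.01269 — 2 statements merged into one kernel-verified Lean document; each statement's English description precedes it below -/
import Mathlib

section
/- Let (S, d) be a separable metric space. For any two Borel probability measures μ₁, μ₂ on S, the Prokhorov distance satisfies d^{(P)}(μ₁, μ₂) ≤ ((3/2) d^{(FM)}(μ₁, μ₂))^{1/2}, where d^{(FM)} is the Fortet–Mourier (bounded-Lipschitz) distance. -/
open MeasureTheory

/-- The Prokhorov distance built from a distance function `d` on a space `X`. -/
noncomputable def prokhorovOf {X : Type*} [MeasurableSpace X] (d : X → X → ℝ)
    (P Q : Measure X) : ℝ :=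
  sInf {ε : ℝ | 0 < ε ∧ ∀ B : Set X, MeasurableSet B →
    P B ≤ Q {x | ∃ y ∈ B, d x y < ε} + ENNReal.ofReal ε}

/-- The Fortet–Mourier (bounded-Lipschitz) distance:
`sup {|∫ h dμ₁ − ∫ h dμ₂| : ‖h‖_∞ + ‖h‖_Lip ≤ 1}`. -/
noncomputable def fortetMourier {S : Type*} [MetricSpace S] [MeasurableSpace S]
    (μ₁ μ₂ : Measure S) : ℝ :=
  sSup {c : ℝ | ∃ (h : S → ℝ) (A L : ℝ), 0 ≤ A ∧ 0 ≤ L ∧ A + L ≤ 1 ∧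
    (∀ x, |h x| ≤ A) ∧ LipschitzWith (Real.toNNReal L) h ∧
    c = |(∫ x, h x ∂μ₁) - ∫ x, h x ∂μ₂|}

/-- On a separable metric space, the Prokhorov distance is bounded by
`((3/2)·(Fortet–Mourier distance))^{1/2}`. -/
theorem stmt_5 {S : Type*} [MetricSpace S] [TopologicalSpace.SeparableSpace S]
    [MeasurableSpace S] [BorelSpace S]
    (μ₁ μ₂ : Measure S) [IsProbabilityMeasure μ₁] [IsProbabilityMeasure μ₂] :
    prokhorovOf dist μ₁ μ₂ ≤ Real.sqrt ((3 / 2) * fortetMourier μ₁ μ₂) := by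
  set β := fortetMourier μ₁ μ₂ with hβdef
  set t := Real.sqrt ((3 / 2) * β) with htdef
  have ht0 : 0 ≤ t := Real.sqrt_nonneg _
  -- the FM set is bounded above by 2
  have hbdd : ∀ c ∈ {c : ℝ | ∃ (h : S → ℝ) (A L : ℝ), 0 ≤ A ∧ 0 ≤ L ∧ A + L ≤ 1 ∧
      (∀ x, |h x| ≤ A) ∧ LipschitzWith (Real.toNNReal L) h ∧
      c = |(∫ x, h x ∂μ₁) - ∫ x, h x ∂μ₂|}, c ≤ 2 := by
    rintro c ⟨h, A, L, hA, hL, hAL, hb, hlip, rfl⟩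
    have h1 : ‖∫ x, h x ∂μ₁‖ ≤ A * ((μ₁ Set.univ).toReal) :=
      norm_integral_le_of_norm_le_const (ae_of_all _ (fun x => by simpa using hb x))
    have h2 : ‖∫ x, h x ∂μ₂‖ ≤ A * ((μ₂ Set.univ).toReal) :=
      norm_integral_le_of_norm_le_const (ae_of_all _ (fun x => by simpa using hb x))
    simp only [measure_univ, ENNReal.toReal_one, mul_one] at h1 h2
    have := abs_sub (∫ x, h x ∂μ₁) (∫ x, h x ∂μ₂)
    calc |(∫ x, h x ∂μ₁) - ∫ x, h x ∂μ₂| ≤ ‖∫ x, h x ∂μ₁‖ + ‖∫ x, h x ∂μ₂‖ := by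
          rw [Real.norm_eq_abs, Real.norm_eq_abs]; exact abs_sub _ _
      _ ≤ A + A := add_le_add h1 h2
      _ ≤ 2 := by linarith
  have hβ0 : 0 ≤ β := by
    apply Real.sSup_nonneg'
    refine ⟨0, ⟨fun _ => (0:ℝ), 0, 0, le_refl _, le_refl _, by norm_num,
      fun x => by simp, by simpa using (LipschitzWith.const (0:ℝ)), by simp⟩, le_refl _⟩
  -- key: every ε > t is in the Prokhorov set
  have main : ∀ ε : ℝ, t < ε → (0 < ε ∧ ∀ B : Set S, MeasurableSet B →
      μ₁ B ≤ μ₂ {x | ∃ y ∈ B, dist x y < ε} + ENNReal.ofReal ε) := by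
    intro ε hε
    have hε0 : 0 < ε := lt_of_le_of_lt ht0 hε
    refine ⟨hε0, fun B hB => ?_⟩
    by_cases hε1 : 1 ≤ ε
    · calc μ₁ B ≤ 1 := prob_le_one
        _ ≤ ENNReal.ofReal ε := by
            rw [show (1:ENNReal) = ENNReal.ofReal 1 by simp]
            exact ENNReal.ofReal_le_ofReal hε1
        _ ≤ _ := le_add_self
    push_neg at hε1
    rcases B.eq_empty_or_nonempty with rfl | hBne
    · simp
    -- test function argument
    have hβε : β ≤ 2/3 * ε^2 := by
      have := Real.sq_sqrt (by positivity : (0:ℝ) ≤ (3/2) * β)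
      nlinarith [Real.sqrt_nonneg ((3/2)*β), sq_nonneg (t - ε)]
    set U : Set S := {x | ∃ y ∈ B, dist x y < ε} with hUdef
    have hUopen : IsOpen U := by
      have : U = (fun x => Metric.infDist x B) ⁻¹' (Set.Iio ε) := by
        ext x
        simp only [hUdef, Set.mem_setOf_eq, Set.mem_preimage, Set.mem_Iio]
        exact (Metric.infDist_lt_iff hBne).symm
      rw [this]
      exact isOpen_Iio.preimage (Metric.continuous_infDist_pt B)
    set a : ℝ := 2 * ε / (2 + ε) with hadef
    have ha0 : 0 < a := by positivity
    set g : S → ℝ := fun x => max 0 (1 - Metric.infDist x B / ε) with hgdef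
    have hg0 : ∀ x, 0 ≤ g x := fun x => le_max_left _ _
    have hg1 : ∀ x, g x ≤ 1 := by
      intro x
      apply max_le (by norm_num)
      have := Metric.infDist_nonneg (x := x) (s := B)
      have : 0 ≤ Metric.infDist x B / ε := by positivity
      linarith
    have hglip : ∀ x y : S, |g x - g y| ≤ (1/ε) * dist x y := by
      intro x y
      have h1 : |g x - g y| ≤ |(1 - Metric.infDist x B / ε) - (1 - Metric.infDist y B / ε)| := by
        rw [hgdef]
        simpa [max_comm] using
          abs_max_sub_max_le_abs (1 - Metric.infDist x B / ε) (1 - Metric.infDist y B / ε) 0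
      have h2 : |(1 - Metric.infDist x B / ε) - (1 - Metric.infDist y B / ε)|
          = |Metric.infDist x B - Metric.infDist y B| / ε := by
        have he : (1 - Metric.infDist x B / ε) - (1 - Metric.infDist y B / ε)
            = (Metric.infDist y B - Metric.infDist x B) / ε := by field_simp; ring
        rw [he, abs_div, abs_of_pos hε0, abs_sub_comm]
      have h3 : |Metric.infDist x B - Metric.infDist y B| ≤ dist x y := by
        rw [abs_sub_le_iff]
        constructor
        · have := Metric.infDist_le_infDist_add_dist (x := x) (y := y) (s := B); linarith
        · have := Metric.infDist_le_infDist_add_dist (x := y) (y := x) (s := B)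
          rw [dist_comm] at this; linarith
      calc |g x - g y| ≤ |Metric.infDist x B - Metric.infDist y B| / ε := h1.trans_eq h2
        _ ≤ dist x y / ε := div_le_div_of_nonneg_right h3 hε0.le
        _ = (1/ε) * dist x y := by ring
    set h : S → ℝ := fun x => a * g x - a / 2 with hhdef
    have hlip : LipschitzWith (Real.toNNReal (a/ε)) h := by
      rw [lipschitzWith_iff_dist_le_mul]
      intro x y
      have : dist (h x) (h y) = a * |g x - g y| := by
        rw [Real.dist_eq, hhdef]
        rw [show a * g x - a/2 - (a * g y - a/2) = a * (g x - g y) by ring,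
          abs_mul, abs_of_pos ha0]
      rw [this, Real.coe_toNNReal _ (by positivity)]
      calc a * |g x - g y| ≤ a * ((1/ε) * dist x y) :=
            mul_le_mul_of_nonneg_left (hglip x y) ha0.le
        _ = a / ε * dist x y := by ring
    have hhb : ∀ x, |h x| ≤ a / 2 := by
      intro x
      rw [hhdef, abs_le]
      constructor
      · have := hg0 x; simp only; nlinarith
      · have := hg1 x; simp only; nlinarith
    have hgcont : Continuous g := by
      apply Continuous.max continuous_const
      exact continuous_const.sub ((Metric.continuous_infDist_pt B).div_const ε)
    have hgint : ∀ (μ : Measure S) [IsProbabilityMeasure μ], Integrable g μ := by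
      intro μ _
      apply Integrable.mono' (integrable_const (1:ℝ)) hgcont.aestronglyMeasurable
      filter_upwards with x
      rw [Real.norm_eq_abs, abs_of_nonneg (hg0 x)]
      exact hg1 x
    have hint : ∀ (μ : Measure S) [IsProbabilityMeasure μ],
        ∫ x, h x ∂μ = a * ∫ x, g x ∂μ - a/2 := by
      intro μ _
      rw [hhdef]
      rw [integral_sub ((hgint μ).const_mul a) (integrable_const _)]
      rw [integral_const_mul, integral_const]
      simp
    -- lower bound for μ₁
    have hlow : (μ₁ B).toReal ≤ ∫ x, g x ∂μ₁ := by
      rw [← measureReal_def, ← integral_indicator_one hB]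
      apply integral_mono ((integrable_const (1:ℝ)).indicator hB) (hgint μ₁)
      intro x
      by_cases hx : x ∈ B
      · simp only [Set.indicator_of_mem hx, Pi.one_apply]
        rw [hgdef]
        simp [Metric.infDist_zero_of_mem hx]
      · simp only [Set.indicator_of_notMem hx]
        exact hg0 x
    -- upper bound for μ₂
    have hup : ∫ x, g x ∂μ₂ ≤ (μ₂ U).toReal := by
      rw [← measureReal_def, ← integral_indicator_one hUopen.measurableSet]
      apply integral_mono (hgint μ₂) ((integrable_const (1:ℝ)).indicator hUopen.measurableSet)
      intro x
      by_cases hx : x ∈ U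
      · simp only [Set.indicator_of_mem hx, Pi.one_apply]
        exact hg1 x
      · simp only [Set.indicator_of_notMem hx]
        have hxd : ε ≤ Metric.infDist x B := by
          by_contra hcon
          push_neg at hcon
          exact hx ((Metric.infDist_lt_iff hBne).mp hcon)
        rw [hgdef]
        apply max_le (le_refl _)
        have : 1 ≤ Metric.infDist x B / ε := (one_le_div hε0).mpr hxd
        linarith
    -- membership in the FM set
    have hmem : |(∫ x, h x ∂μ₁) - ∫ x, h x ∂μ₂| ≤ β := by
      apply le_csSup ⟨2, hbdd⟩
      refine ⟨h, a/2, a/ε, by positivity, by positivity, ?_, hhb, hlip, rfl⟩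
      rw [hadef]
      rw [show 2 * ε / (2 + ε) / 2 + 2 * ε / (2 + ε) / ε = 1 by field_simp; ring]
    have hdiff : a * ((μ₁ B).toReal - (μ₂ U).toReal) ≤ β := by
      have h1 : (∫ x, h x ∂μ₁) - ∫ x, h x ∂μ₂ = a * (∫ x, g x ∂μ₁ - ∫ x, g x ∂μ₂) := by
        rw [hint μ₁, hint μ₂]; ring
      have h2 : a * ((μ₁ B).toReal - (μ₂ U).toReal) ≤ (∫ x, h x ∂μ₁) - ∫ x, h x ∂μ₂ := by
        rw [h1]
        apply mul_le_mul_of_nonneg_left (by linarith) ha0.le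
      exact h2.trans ((le_abs_self _).trans hmem)
    have hfinal : (μ₁ B).toReal ≤ (μ₂ U).toReal + ε := by
      have h2ε : (0:ℝ) < 2 + ε := by linarith
      rw [hadef] at hdiff
      rw [div_mul_eq_mul_div, div_le_iff₀ h2ε] at hdiff
      nlinarith [ENNReal.toReal_nonneg (a := μ₂ U), ENNReal.toReal_nonneg (a := μ₁ B)]
    calc μ₁ B = ENNReal.ofReal ((μ₁ B).toReal) := (ENNReal.ofReal_toReal (measure_ne_top _ _)).symm
      _ ≤ ENNReal.ofReal ((μ₂ U).toReal + ε) := ENNReal.ofReal_le_ofReal hfinal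
      _ = ENNReal.ofReal ((μ₂ U).toReal) + ENNReal.ofReal ε := ENNReal.ofReal_add ENNReal.toReal_nonneg hε0.le
      _ = μ₂ U + ENNReal.ofReal ε := by rw [ENNReal.ofReal_toReal (measure_ne_top _ _)]
  -- conclude
  rw [prokhorovOf]
  apply le_of_forall_gt_imp_ge_of_dense
  intro ε hε
  apply csInf_le
  · exact ⟨0, fun x hx => hx.1.le⟩
  · exact main ε hε
end

section
/- Let μ₁, μ₂ be Borel probability measures on ℝ with finite first moments and distribution functions F₁, F₂. Then the Wasserstein distance of order 1 between μ₁ and μ₂ equals ∫_ℝ |F₁(x) − F₂(x)| dx. -/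
open MeasureTheory
open scoped ENNReal NNReal

/-- The Wasserstein (Gini–Monge–Wasserstein) distance of order 1, as an `ℝ≥0∞`-valued
infimum of transport costs over couplings. -/
noncomputable def wasserstein1 {X : Type*} [MeasurableSpace X] (d : X → X → ℝ≥0∞)
    (μ ν : Measure X) : ℝ≥0∞ :=
  sInf {c : ℝ≥0∞ | ∃ γ : Measure (X × X),
    γ.map Prod.fst = μ ∧ γ.map Prod.snd = ν ∧ c = ∫⁻ z, d z.1 z.2 ∂γ}


open MeasureTheory Set Filter ProbabilityTheory
open scoped ENNReal NNReal Topology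

namespace Dall

noncomputable def quant (μ : Measure ℝ) (u : ℝ) : ℝ := sInf {x | u ≤ cdf μ x}

lemma quant_set_nonempty (μ : Measure ℝ) {u : ℝ} (hu : u < 1) :
    {x | u ≤ cdf μ x}.Nonempty := by
  obtain ⟨x, hx⟩ := ((tendsto_cdf_atTop μ).eventually (eventually_ge_nhds hu)).exists
  exact ⟨x, hx⟩

lemma quant_set_bddBelow (μ : Measure ℝ) {u : ℝ} (hu : 0 < u) :
    BddBelow {x | u ≤ cdf μ x} := by
  obtain ⟨z, hz⟩ := eventually_atBot.mp
    ((tendsto_cdf_atBot μ).eventually (eventually_lt_nhds hu))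
  refine ⟨z, fun s hs => ?_⟩
  by_contra h
  exact absurd hs (not_le.mpr (hz s (le_of_not_ge h)))

lemma le_cdf_quant (μ : Measure ℝ) {u : ℝ} (h0 : 0 < u) (h1 : u < 1) :
    u ≤ cdf μ (quant μ u) := by
  have hev : ∀ᶠ y in 𝓝[>] (quant μ u), u ≤ cdf μ y := by
    filter_upwards [self_mem_nhdsWithin] with y hy
    obtain ⟨s, hs, hsy⟩ := exists_lt_of_csInf_lt (quant_set_nonempty μ h1) hy
    exact hs.trans (monotone_cdf μ hsy.le)
  have ht : Tendsto (cdf μ) (𝓝[>] (quant μ u)) (𝓝 (cdf μ (quant μ u))) :=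
    ((cdf μ).right_continuous _).mono Ioi_subset_Ici_self
  exact ge_of_tendsto ht hev

lemma quant_le_iff (μ : Measure ℝ) {u x : ℝ} (h0 : 0 < u) (h1 : u < 1) :
    quant μ u ≤ x ↔ u ≤ cdf μ x := by
  constructor
  · intro h
    exact (le_cdf_quant μ h0 h1).trans (monotone_cdf μ h)
  · intro h
    exact csInf_le (quant_set_bddBelow μ h0) h

lemma monotoneOn_quant (μ : Measure ℝ) : MonotoneOn (quant μ) (Ioo 0 1) :=
  fun _ hu _ hv huv =>
    csInf_le_csInf (quant_set_bddBelow μ hu.1) (quant_set_nonempty μ hv.2)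
      (fun _ hx => le_trans huv hx)

lemma ofReal_abs (r : ℝ) :
    ENNReal.ofReal |r| = ENNReal.ofReal r + ENNReal.ofReal (-r) := by
  rcases le_total 0 r with h | h
  · rw [abs_of_nonneg h, ENNReal.ofReal_of_nonpos (neg_nonpos.mpr h), add_zero]
  · rw [abs_of_nonpos h, ENNReal.ofReal_of_nonpos h, zero_add]

lemma vol_Ioo_inter_Iic {c : ℝ} (h1 : c ≤ 1) :
    volume (Ioo (0:ℝ) 1 ∩ Iic c) = ENNReal.ofReal c := by
  have h : (Ioo (0:ℝ) 1 ∩ Iic c : Set ℝ) =ᵐ[volume] (Ioc (0:ℝ) c : Set ℝ) := by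
    rw [MeasureTheory.ae_eq_set]
    constructor
    · refine measure_mono_null (fun u hu => ?_) (measure_empty)
      exact absurd ⟨hu.1.1.1, hu.1.2⟩ hu.2
    · refine measure_mono_null (fun u hu => ?_) (measure_singleton (1:ℝ))
      have : u = 1 := by
        by_contra hne
        exact hu.2 ⟨⟨hu.1.1, lt_of_le_of_ne (hu.1.2.trans h1) hne⟩, hu.1.2⟩
      simp [this]
  rw [measure_congr h, Real.volume_Ioc, sub_zero]

lemma vol_Ioo_inter_Ioc {c₂ c₁ : ℝ} (h0 : 0 ≤ c₂) (h1 : c₁ ≤ 1) :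
    volume (Ioo (0:ℝ) 1 ∩ Ioc c₂ c₁) = ENNReal.ofReal (c₁ - c₂) := by
  have h : (Ioo (0:ℝ) 1 ∩ Ioc c₂ c₁ : Set ℝ) =ᵐ[volume] (Ioc c₂ c₁ : Set ℝ) := by
    rw [MeasureTheory.ae_eq_set]
    refine ⟨measure_mono_null (fun u hu => absurd hu.1.2 hu.2) measure_empty, ?_⟩
    refine measure_mono_null (fun u hu => ?_) (measure_singleton (1:ℝ))
    have hu0 : 0 < u := lt_of_le_of_lt h0 hu.1.1
    have hu1 : u ≤ 1 := hu.1.2.trans h1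
    have : u = 1 := by
      by_contra hne
      exact hu.2 ⟨⟨hu0, lt_of_le_of_ne hu1 hne⟩, hu.1⟩
    simp [this]
  rw [measure_congr h, Real.volume_Ioc]

/-- Key Tonelli swap: `∫ (h - f)⁺ dν = ∫ ν {f ≤ x < h} dx`. -/
lemma key_swap {α : Type*} [MeasurableSpace α] (ν : Measure α) [SFinite ν]
    (f h : α → ℝ) (hf : Measurable f) (hh : Measurable h) :
    ∫⁻ a, ENNReal.ofReal (h a - f a) ∂ν = ∫⁻ x, ν {a | f a ≤ x ∧ x < h a} := by
  have hS : MeasurableSet {p : α × ℝ | f p.1 ≤ p.2 ∧ p.2 < h p.1} :=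
    (measurableSet_le (hf.comp measurable_fst) measurable_snd).inter
      (measurableSet_lt measurable_snd (hh.comp measurable_fst))
  have hind : Measurable ({p : α × ℝ | f p.1 ≤ p.2 ∧ p.2 < h p.1}.indicator
      (fun _ => (1 : ℝ≥0∞))) := measurable_const.indicator hS
  calc ∫⁻ a, ENNReal.ofReal (h a - f a) ∂ν
      = ∫⁻ a, ∫⁻ x, {p : α × ℝ | f p.1 ≤ p.2 ∧ p.2 < h p.1}.indicator
          (fun _ => (1:ℝ≥0∞)) (a, x) ∂volume ∂ν := by
        refine lintegral_congr fun a => ?_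
        have : ∫⁻ x, (Ico (f a) (h a)).indicator (fun _ => (1:ℝ≥0∞)) x ∂volume
            = volume (Ico (f a) (h a)) := lintegral_indicator_one measurableSet_Ico
        rw [Real.volume_Ico] at this
        rw [← this]
        refine lintegral_congr fun x => ?_
        simp only [Set.indicator_apply, Set.mem_Ico, Set.mem_setOf_eq]
    _ = ∫⁻ x, ∫⁻ a, {p : α × ℝ | f p.1 ≤ p.2 ∧ p.2 < h p.1}.indicator
          (fun _ => (1:ℝ≥0∞)) (a, x) ∂ν ∂volume :=
        lintegral_lintegral_swap hind.aemeasurable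
    _ = ∫⁻ x, ν {a | f a ≤ x ∧ x < h a} := by
        refine lintegral_congr fun x => ?_
        have hmeas : MeasurableSet {a | f a ≤ x ∧ x < h a} :=
          (measurableSet_le hf measurable_const).inter
            (measurableSet_lt measurable_const hh)
        rw [← lintegral_indicator_one hmeas]
        refine lintegral_congr fun a => ?_
        simp only [Set.indicator_apply, Set.mem_setOf_eq, Pi.one_apply]

instance : IsProbabilityMeasure (volume.restrict (Ioo (0:ℝ) 1)) :=
  ⟨by simp [Measure.restrict_apply_univ, Real.volume_Ioo]⟩

/-- marginal of the quantile coupling -/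
lemma map_quant (μ : Measure ℝ) [IsProbabilityMeasure μ] {g : ℝ → ℝ} (hg : Measurable g)
    (hae : quant μ =ᵐ[volume.restrict (Ioo (0:ℝ) 1)] g) :
    (volume.restrict (Ioo (0:ℝ) 1)).map g = μ := by
  haveI := Measure.isProbabilityMeasure_map (μ := volume.restrict (Ioo (0:ℝ) 1)) hg.aemeasurable
  refine Measure.ext_of_Iic _ _ fun x => ?_
  rw [Measure.map_apply hg measurableSet_Iic]
  have hsets : (g ⁻¹' Iic x : Set ℝ) =ᵐ[volume.restrict (Ioo (0:ℝ) 1)]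
      (quant μ ⁻¹' Iic x : Set ℝ) := by
    filter_upwards [hae] with u hu
    change (g u ≤ x) = (quant μ u ≤ x)
    rw [hu]
  rw [measure_congr hsets, Measure.restrict_apply' measurableSet_Ioo]
  have hset : quant μ ⁻¹' Iic x ∩ Ioo 0 1 = Ioo (0:ℝ) 1 ∩ Iic (cdf μ x) := by
    ext u
    simp only [mem_inter_iff, mem_preimage, mem_Iic, mem_Ioo]
    constructor
    · rintro ⟨hq, hu0, hu1⟩
      exact ⟨⟨hu0, hu1⟩, (quant_le_iff μ hu0 hu1).mp hq⟩
    · rintro ⟨⟨hu0, hu1⟩, hc⟩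
      exact ⟨(quant_le_iff μ hu0 hu1).mpr hc, hu0, hu1⟩
  rw [hset, vol_Ioo_inter_Iic (cdf_le_one μ x), ofReal_cdf]

/-- one piece of the cost computation -/
lemma piece (μ₁ μ₂ : Measure ℝ) [IsProbabilityMeasure μ₁] [IsProbabilityMeasure μ₂]
    {g₁ g₂ : ℝ → ℝ} (hg₁ : Measurable g₁) (hg₂ : Measurable g₂)
    (hae₁ : quant μ₁ =ᵐ[volume.restrict (Ioo (0:ℝ) 1)] g₁)
    (hae₂ : quant μ₂ =ᵐ[volume.restrict (Ioo (0:ℝ) 1)] g₂) :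
    ∫⁻ u in Ioo (0:ℝ) 1, ENNReal.ofReal (g₂ u - g₁ u)
      = ∫⁻ x, ENNReal.ofReal (cdf μ₁ x - cdf μ₂ x) := by
  rw [key_swap _ g₁ g₂ hg₁ hg₂]
  refine lintegral_congr fun x => ?_
  have hsets : ({u | g₁ u ≤ x ∧ x < g₂ u} : Set ℝ) =ᵐ[volume.restrict (Ioo (0:ℝ) 1)]
      ({u | quant μ₁ u ≤ x ∧ x < quant μ₂ u} : Set ℝ) := by
    filter_upwards [hae₁, hae₂] with u h1 h2
    change (g₁ u ≤ x ∧ x < g₂ u) = (quant μ₁ u ≤ x ∧ x < quant μ₂ u)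
    rw [h1, h2]
  rw [measure_congr hsets, Measure.restrict_apply' measurableSet_Ioo]
  have hset : {u | quant μ₁ u ≤ x ∧ x < quant μ₂ u} ∩ Ioo 0 1
      = Ioo (0:ℝ) 1 ∩ Ioc (cdf μ₂ x) (cdf μ₁ x) := by
    ext u
    simp only [mem_inter_iff, mem_setOf_eq, mem_Ioo, mem_Ioc]
    constructor
    · rintro ⟨⟨hq1, hq2⟩, hu0, hu1⟩
      refine ⟨⟨hu0, hu1⟩, ?_, (quant_le_iff μ₁ hu0 hu1).mp hq1⟩
      exact not_le.mp fun hc => (not_le.mpr hq2) ((quant_le_iff μ₂ hu0 hu1).mpr hc)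
    · rintro ⟨⟨hu0, hu1⟩, hc2, hc1⟩
      refine ⟨⟨(quant_le_iff μ₁ hu0 hu1).mpr hc1, ?_⟩, hu0, hu1⟩
      exact lt_of_not_ge fun hle => absurd ((quant_le_iff μ₂ hu0 hu1).mp hle) (not_le.mpr hc2)
  rw [hset, vol_Ioo_inter_Ioc (cdf_nonneg μ₂ x) (cdf_le_one μ₁ x)]

/-- the pointwise lower bound -/
lemma point {α : Type*} [MeasurableSpace α] {ν₁ ν₂ : Measure ℝ}
    [IsProbabilityMeasure ν₁] [IsProbabilityMeasure ν₂] (γ : Measure α) {f g : α → ℝ}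
    (hf : Measurable f) (hg : Measurable g) (h1 : γ.map f = ν₁) (h2 : γ.map g = ν₂) (x : ℝ) :
    ENNReal.ofReal (cdf ν₁ x - cdf ν₂ x) ≤ γ {a | f a ≤ x ∧ x < g a} := by
  rcases le_total (cdf ν₁ x) (cdf ν₂ x) with h | h
  · rw [ENNReal.ofReal_of_nonpos (sub_nonpos.mpr h)]
    exact zero_le
  · have hA : γ {a | f a ≤ x} = ν₁ (Iic x) := by
      rw [← h1, Measure.map_apply hf measurableSet_Iic]; rfl
    have hB : γ {a | g a ≤ x} = ν₂ (Iic x) := by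
      rw [← h2, Measure.map_apply hg measurableSet_Iic]; rfl
    have hba : ν₂ (Iic x) ≤ ν₁ (Iic x) := by
      rw [cdf_eq_real, cdf_eq_real, measureReal_def, measureReal_def] at h
      exact (ENNReal.toReal_le_toReal (measure_ne_top _ _) (measure_ne_top _ _)).mp h
    have key : ν₁ (Iic x) ≤ γ {a | f a ≤ x ∧ x < g a} + ν₂ (Iic x) := by
      rw [← hA, ← hB]
      refine le_trans (measure_mono fun a (ha : f a ≤ x) => ?_) (measure_union_le _ _)
      by_cases hax : g a ≤ x
      · exact Or.inr hax
      · exact Or.inl ⟨ha, lt_of_not_ge hax⟩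
    rw [cdf_eq_real, cdf_eq_real, measureReal_def, measureReal_def, ← ENNReal.toReal_sub_of_le hba (measure_ne_top _ _),
      ENNReal.ofReal_toReal (ne_top_of_le_ne_top (measure_ne_top ν₁ _) tsub_le_self)]
    exact tsub_le_iff_right.mpr key

/-- lower bound: any coupling costs at least `∫ |F₁ - F₂|`. -/
lemma lower (μ₁ μ₂ : Measure ℝ) [IsProbabilityMeasure μ₁] [IsProbabilityMeasure μ₂]
    (γ : Measure (ℝ × ℝ)) (h1 : γ.map Prod.fst = μ₁) (h2 : γ.map Prod.snd = μ₂) :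
    ∫⁻ x, ENNReal.ofReal |cdf μ₁ x - cdf μ₂ x| ≤ ∫⁻ z, edist z.1 z.2 ∂γ := by
  haveI : IsProbabilityMeasure γ := ⟨by
    rw [← Set.preimage_univ (f := Prod.fst),
      ← Measure.map_apply measurable_fst MeasurableSet.univ, h1]
    exact measure_univ⟩
  calc ∫⁻ x, ENNReal.ofReal |cdf μ₁ x - cdf μ₂ x|
      = ∫⁻ x, (ENNReal.ofReal (cdf μ₁ x - cdf μ₂ x)
          + ENNReal.ofReal (cdf μ₂ x - cdf μ₁ x)) := by
        refine lintegral_congr fun x => ?_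
        rw [ofReal_abs, neg_sub]
    _ = (∫⁻ x, ENNReal.ofReal (cdf μ₁ x - cdf μ₂ x))
          + ∫⁻ x, ENNReal.ofReal (cdf μ₂ x - cdf μ₁ x) :=
        lintegral_add_left
          (((monotone_cdf μ₁).measurable.sub (monotone_cdf μ₂).measurable).ennreal_ofReal) _
    _ ≤ (∫⁻ x, γ {z : ℝ × ℝ | z.1 ≤ x ∧ x < z.2})
          + ∫⁻ x, γ {z : ℝ × ℝ | z.2 ≤ x ∧ x < z.1} :=
        add_le_add
          (lintegral_mono (point γ measurable_fst measurable_snd h1 h2))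
          (lintegral_mono (point γ measurable_snd measurable_fst h2 h1))
    _ = (∫⁻ z : ℝ × ℝ, ENNReal.ofReal (z.2 - z.1) ∂γ)
          + ∫⁻ z : ℝ × ℝ, ENNReal.ofReal (z.1 - z.2) ∂γ := by
        rw [key_swap γ _ _ measurable_fst measurable_snd,
          key_swap γ _ _ measurable_snd measurable_fst]
    _ = ∫⁻ z : ℝ × ℝ, (ENNReal.ofReal (z.2 - z.1) + ENNReal.ofReal (z.1 - z.2)) ∂γ :=
        (lintegral_add_left ((measurable_snd.sub measurable_fst).ennreal_ofReal) _).symm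
    _ = ∫⁻ z, edist z.1 z.2 ∂γ := by
        refine lintegral_congr fun z => ?_
        rw [edist_dist, Real.dist_eq, ofReal_abs, neg_sub, add_comm]

end Dall

open Dall

private theorem stmt_6' (μ₁ μ₂ : Measure ℝ) [IsProbabilityMeasure μ₁] [IsProbabilityMeasure μ₂]
    (F₁ F₂ : ℝ → ℝ)
    (hF₁ : ∀ x, F₁ x = (μ₁ (Set.Iic x)).toReal)
    (hF₂ : ∀ x, F₂ x = (μ₂ (Set.Iic x)).toReal) :
    sInf {c : ℝ≥0∞ | ∃ γ : Measure (ℝ × ℝ),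
      γ.map Prod.fst = μ₁ ∧ γ.map Prod.snd = μ₂ ∧ c = ∫⁻ z, edist z.1 z.2 ∂γ}
      = ∫⁻ x, ENNReal.ofReal |F₁ x - F₂ x| := by
  have hgoal : ∫⁻ x, ENNReal.ofReal |F₁ x - F₂ x|
      = ∫⁻ x, ENNReal.ofReal |cdf μ₁ x - cdf μ₂ x| := by
    refine lintegral_congr fun x => ?_
    rw [hF₁ x, hF₂ x, cdf_eq_real, cdf_eq_real, measureReal_def, measureReal_def]
  rw [hgoal]
  have haem₁ := aemeasurable_restrict_of_monotoneOn (μ := volume) measurableSet_Ioo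
    (monotoneOn_quant μ₁)
  have haem₂ := aemeasurable_restrict_of_monotoneOn (μ := volume) measurableSet_Ioo
    (monotoneOn_quant μ₂)
  set g₁ := haem₁.mk (quant μ₁) with hg₁def
  set g₂ := haem₂.mk (quant μ₂) with hg₂def
  have hg₁ : Measurable g₁ := haem₁.measurable_mk
  have hg₂ : Measurable g₂ := haem₂.measurable_mk
  have hae₁ : quant μ₁ =ᵐ[volume.restrict (Ioo (0:ℝ) 1)] g₁ := haem₁.ae_eq_mk
  have hae₂ : quant μ₂ =ᵐ[volume.restrict (Ioo (0:ℝ) 1)] g₂ := haem₂.ae_eq_mk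
  apply le_antisymm
  · apply sInf_le
    refine ⟨(volume.restrict (Ioo (0:ℝ) 1)).map (fun u => (g₁ u, g₂ u)), ?_, ?_, ?_⟩
    · rw [Measure.map_map measurable_fst (hg₁.prodMk hg₂)]
      exact map_quant μ₁ hg₁ hae₁
    · rw [Measure.map_map measurable_snd (hg₁.prodMk hg₂)]
      exact map_quant μ₂ hg₂ hae₂
    · rw [lintegral_map (measurable_fst.edist measurable_snd) (hg₁.prodMk hg₂)]
      have hcost : ∫⁻ u in Ioo (0:ℝ) 1, edist (g₁ u) (g₂ u)
          = ∫⁻ x, ENNReal.ofReal |cdf μ₁ x - cdf μ₂ x| := by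
        calc ∫⁻ u in Ioo (0:ℝ) 1, edist (g₁ u) (g₂ u)
            = ∫⁻ u in Ioo (0:ℝ) 1,
                (ENNReal.ofReal (g₂ u - g₁ u) + ENNReal.ofReal (g₁ u - g₂ u)) := by
              refine lintegral_congr fun u => ?_
              rw [edist_dist, Real.dist_eq, ofReal_abs, neg_sub, add_comm]
          _ = (∫⁻ u in Ioo (0:ℝ) 1, ENNReal.ofReal (g₂ u - g₁ u))
                + ∫⁻ u in Ioo (0:ℝ) 1, ENNReal.ofReal (g₁ u - g₂ u) :=
              lintegral_add_left ((hg₂.sub hg₁).ennreal_ofReal) _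
          _ = (∫⁻ x, ENNReal.ofReal (cdf μ₁ x - cdf μ₂ x))
                + ∫⁻ x, ENNReal.ofReal (cdf μ₂ x - cdf μ₁ x) := by
              rw [piece μ₁ μ₂ hg₁ hg₂ hae₁ hae₂, piece μ₂ μ₁ hg₂ hg₁ hae₂ hae₁]
          _ = ∫⁻ x, ENNReal.ofReal |cdf μ₁ x - cdf μ₂ x| := by
              rw [← lintegral_add_left
                (show Measurable fun x => ENNReal.ofReal (cdf μ₁ x - cdf μ₂ x) from
                (((monotone_cdf μ₁).measurable.sub (monotone_cdf μ₂).measurable).ennreal_ofReal))]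
              refine lintegral_congr fun x => ?_
              rw [ofReal_abs, neg_sub]
      exact hcost.symm
  · refine le_sInf fun c hc => ?_
    obtain ⟨γ, hγ1, hγ2, rfl⟩ := hc
    exact lower μ₁ μ₂ γ hγ1 hγ2

/-- For Borel probability measures `μ₁, μ₂` on `ℝ` with finite first moments and
distribution functions `F₁, F₂`, the Wasserstein distance of order 1 equals
`∫ |F₁(x) − F₂(x)| dx` (Dall'Aglio's theorem). -/
theorem stmt_6 (μ₁ μ₂ : Measure ℝ) [IsProbabilityMeasure μ₁] [IsProbabilityMeasure μ₂]
    (hm₁ : Integrable (fun x => |x|) μ₁) (hm₂ : Integrable (fun x => |x|) μ₂)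
    (F₁ F₂ : ℝ → ℝ)
    (hF₁ : ∀ x, F₁ x = (μ₁ (Set.Iic x)).toReal)
    (hF₂ : ∀ x, F₂ x = (μ₂ (Set.Iic x)).toReal) :
    wasserstein1 (fun x y => edist x y) μ₁ μ₂
      = ∫⁻ x, ENNReal.ofReal |F₁ x - F₂ x| := by
  unfold wasserstein1
  exact stmt_6' μ₁ μ₂ F₁ F₂ hF₁ hF₂
end
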